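/- Let f, g : ℕ → ℕ with 1 ≤ g(k) < f(k) for all k, and suppose liminf_{k→∞} g(k) < ∞, i.e. g is bounded on some infinite set. Then 𝔠(f,g) = 2^{ℵ₀}, the cardinality of the continuum. -/

import Mathlib

/-- `B` is a `g`-slalom: a sequence of finite sets of naturals with `|B k| = g k`. -/
def IsSlalom (g : ℕ → ℕ) (B : ℕ → Finset ℕ) : Prop := ∀ k, (B k).card = g k

/-- `x` is covered by the slalom `B`. -/
def Covers (B : ℕ → Finset ℕ) (x : ℕ → ℕ) : Prop := ∀ k, x k ∈ B k

/-- `slalomCov f g` is the least cardinality of a family of `g`-slaloms covering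
every `x : ℕ → ℕ` with `x k < f k` for all `k`. -/
noncomputable def slalomCov (f g : ℕ → ℕ) : Cardinal :=
  sInf { c : Cardinal | ∃ 𝓑 : Set (ℕ → Finset ℕ),
    (∀ B ∈ 𝓑, IsSlalom g B) ∧
    (∀ x : ℕ → ℕ, (∀ k, x k < f k) → ∃ B ∈ 𝓑, Covers B x) ∧
    c = Cardinal.mk 𝓑 }

/-- Pigeonhole: if `g` is bounded on an infinite set, some value `c ≥ 1` is
attained infinitely often. -/
lemma SlalomAux.pigeon (g : ℕ → ℕ) (hg : ∀ k, 1 ≤ g k) (C : ℕ)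
    (hS : {k : ℕ | g k ≤ C}.Infinite) :
    ∃ c : ℕ, 1 ≤ c ∧ {k : ℕ | g k = c}.Infinite := by
  by_contra h
  push_neg at h
  have hfin : ∀ c ∈ Finset.range (C+1), ({k : ℕ | g k = c} : Set ℕ).Finite := by
    intro c _
    rcases Nat.eq_zero_or_pos c with rfl | hc
    · convert Set.finite_empty
      ext k; simp only [Set.mem_setOf_eq, Set.mem_empty_iff_false, iff_false]
      have := hg k; omega
    · exact h c hc
  have : ({k : ℕ | g k ≤ C} : Set ℕ).Finite := by
    apply Set.Finite.subset (Set.Finite.biUnion (Finset.range (C+1)).finite_toSet hfin)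
    intro k hk
    simp only [Set.mem_iUnion, Finset.mem_coe, Finset.mem_range, Set.mem_setOf_eq]
    exact ⟨g k, by simpa using Nat.lt_succ_of_le hk, rfl⟩
  exact hS this

/-- The upper-bound family: all `g`-slaloms contained in `Finset.range (f k)`. -/
lemma SlalomAux.upper (f g : ℕ → ℕ) (hg : ∀ k, 1 ≤ g k) (hgf : ∀ k, g k < f k) :
    ∃ 𝓑 : Set (ℕ → Finset ℕ),
    (∀ B ∈ 𝓑, IsSlalom g B) ∧
    (∀ x : ℕ → ℕ, (∀ k, x k < f k) → ∃ B ∈ 𝓑, Covers B x) ∧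
    Cardinal.mk 𝓑 ≤ Cardinal.continuum := by
  refine ⟨{B | IsSlalom g B ∧ ∀ k, B k ⊆ Finset.range (f k)}, fun B hB => hB.1, ?_, ?_⟩
  · intro x hx
    have h : ∀ k, ∃ u : Finset ℕ, {x k} ⊆ u ∧ u ⊆ Finset.range (f k) ∧ u.card = g k := by
      intro k
      exact Finset.exists_subsuperset_card_eq
        (by simp [Finset.mem_range, hx k]) (by simpa using hg k)
        (by simpa using (hgf k).le)
    choose u hu1 hu2 hu3 using h
    exact ⟨u, ⟨hu3, hu2⟩, fun k => hu1 k (Finset.mem_singleton_self _)⟩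
  · calc Cardinal.mk _ ≤ Cardinal.mk (ℕ → Finset ℕ) := Cardinal.mk_set_le _
      _ = Cardinal.mk (Finset ℕ) ^ Cardinal.aleph0 := by
          rw [← Cardinal.mk_nat, Cardinal.power_def]
      _ = Cardinal.aleph0 ^ Cardinal.aleph0 := by
          rw [Cardinal.mk_finset_of_infinite, Cardinal.mk_nat]
      _ = 2 ^ Cardinal.aleph0 := Cardinal.power_self_eq le_rfl
      _ = Cardinal.continuum := Cardinal.two_power_aleph0

/-- Index type for coordinates: a level `n` and a coloring of `n`-strings. -/
abbrev SlalomAux.Idx (c : ℕ) := (n : ℕ) × ((Fin n → Fin (c+1)) → Fin (c+1))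

/-- The test functions used in the lower bound. -/
noncomputable def SlalomAux.X (c : ℕ) (e : SlalomAux.Idx c → ℕ) (r : ℕ → Fin (c+1)) :
    ℕ → ℕ :=
  Function.extend e (fun p => (p.2 (fun i => r i)).val) (fun _ => 0)

lemma SlalomAux.X_apply (c : ℕ) (e : SlalomAux.Idx c → ℕ) (he : Function.Injective e)
    (r : ℕ → Fin (c+1)) (p : SlalomAux.Idx c) :
    SlalomAux.X c e r (e p) = (p.2 (fun i => r i)).val := by
  simp [SlalomAux.X, he.extend_apply]

/-- The lower bound: any covering family has size at least the continuum. -/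
lemma SlalomAux.lower (f g : ℕ → ℕ) (hg : ∀ k, 1 ≤ g k) (hgf : ∀ k, g k < f k)
    (c : ℕ) (hc : 1 ≤ c) (hT : {k : ℕ | g k = c}.Infinite)
    (𝓑 : Set (ℕ → Finset ℕ)) (h1 : ∀ B ∈ 𝓑, IsSlalom g B)
    (h2 : ∀ x : ℕ → ℕ, (∀ k, x k < f k) → ∃ B ∈ 𝓑, Covers B x) :
    Cardinal.continuum ≤ Cardinal.mk 𝓑 := by
  -- an injective enumeration of coordinates inside T = {k | g k = c}
  obtain ⟨e₀, he₀⟩ := exists_injective_nat (SlalomAux.Idx c)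
  set eT := hT.natEmbedding with heT
  set e : SlalomAux.Idx c → ℕ := fun p => (eT (e₀ p) : ℕ) with he_def
  have he : Function.Injective e := fun p q h => he₀ (eT.injective (Subtype.ext h))
  have hgT : ∀ p, g (e p) = c := fun p => (eT (e₀ p)).2
  -- the functions x r are admissible
  have hxlt : ∀ r : ℕ → Fin (c+1), ∀ k, SlalomAux.X c e r k < f k := by
    intro r k
    by_cases h : ∃ p, e p = k
    · obtain ⟨p, rfl⟩ := h
      rw [SlalomAux.X_apply c e he]
      have := (p.2 (fun i => r i)).isLt
      have := hgf (e p); have := hgT p; omega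
    · have : SlalomAux.X c e r k = 0 := Function.extend_apply' _ _ _ h
      rw [this]
      have := hg k; have := hgf k; omega
  -- pick a covering slalom for each r
  choose Φ hΦmem hΦcov using fun r : ℕ → Fin (c+1) => h2 (SlalomAux.X c e r) (hxlt r)
  set Ψ : (ℕ → Fin (c+1)) → 𝓑 := fun r => ⟨Φ r, hΦmem r⟩ with hΨ_def
  -- key: each fiber of Ψ has at most c elements
  have key : ∀ B : 𝓑, Cardinal.mk {r // Ψ r = B} ≤ (c : Cardinal) := by
    intro B
    by_contra hlt
    have hsucc : ((c+1 : ℕ) : Cardinal) ≤ Cardinal.mk {r // Ψ r = B} := by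
      rw [Cardinal.nat_succ]
      exact Order.succ_le_of_lt (not_le.mp hlt)
    rw [← Cardinal.mk_fin (c+1), Cardinal.le_def] at hsucc
    obtain ⟨w⟩ := hsucc
    set r : Fin (c+1) → ℕ → Fin (c+1) := fun i => (w i).1 with hr_def
    have hrinj : Function.Injective r := fun i j h =>
      w.injective (Subtype.ext h)
    have hΦB : ∀ i, Φ (r i) = (B : ℕ → Finset ℕ) := by
      intro i
      have := (w i).2
      exact congrArg Subtype.val this
    -- separate the r i at a common finite level N
    have sep : ∀ i j : Fin (c+1), i ≠ j → ∃ m, r i m ≠ r j m := by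
      intro i j hij
      exact Function.ne_iff.mp (fun h => hij (hrinj h))
    choose m hm using sep
    set N : ℕ := (Finset.univ.sup fun i : Fin (c+1) =>
      Finset.univ.sup fun j : Fin (c+1) =>
        if h : i = j then 0 else m i j h) + 1 with hN_def
    have hmN : ∀ i j (h : i ≠ j), m i j h < N := by
      intro i j h
      have h1 : (if h' : i = j then 0 else m i j h') ≤
          Finset.univ.sup fun j : Fin (c+1) => if h' : i = j then 0 else m i j h' :=
        Finset.le_sup (f := fun j : Fin (c+1) => if h' : i = j then 0 else m i j h')
          (Finset.mem_univ j)
      have h2 : (Finset.univ.sup fun j : Fin (c+1) => if h' : i = j then 0 else m i j h') ≤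
          Finset.univ.sup fun i : Fin (c+1) => Finset.univ.sup fun j : Fin (c+1) =>
            if h' : i = j then 0 else m i j h' :=
        Finset.le_sup (f := fun i : Fin (c+1) => Finset.univ.sup fun j : Fin (c+1) =>
          if h' : i = j then 0 else m i j h') (Finset.mem_univ i)
      rw [dif_neg h] at h1
      omega
    set R : Fin (c+1) → (Fin N → Fin (c+1)) := fun i s => r i s with hR_def
    have hRinj : Function.Injective R := by
      intro i j h
      by_contra hij
      have := congrFun h ⟨m i j hij, hmN i j hij⟩
      exact hm i j hij this
    classical
    set σ : (Fin N → Fin (c+1)) → Fin (c+1) :=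
      fun t => if h : ∃ i, R i = t then h.choose else 0 with hσ_def
    have hσR : ∀ i, σ (R i) = i := by
      intro i
      have hex : ∃ j, R j = R i := ⟨i, rfl⟩
      have : σ (R i) = hex.choose := dif_pos hex
      rw [this]
      exact hRinj hex.choose_spec
    -- evaluate at coordinate k = e ⟨N, σ⟩
    set k := e ⟨N, σ⟩ with hk_def
    have hxk : ∀ i : Fin (c+1), SlalomAux.X c e (r i) k = (i : ℕ) := by
      intro i
      rw [hk_def, SlalomAux.X_apply c e he]
      have : (fun s : Fin N => r i s) = R i := rfl
      show (σ (fun s : Fin N => r i ↑s)).val = i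
      rw [this, hσR]
    have hmem : ∀ i : Fin (c+1), (i : ℕ) ∈ (B : ℕ → Finset ℕ) k := by
      intro i
      have := hΦcov (r i) k
      rwa [hΦB i, hxk i] at this
    -- c+1 distinct elements in a set of size c
    have hcard : (Finset.univ.image fun i : Fin (c+1) => (i : ℕ)) ⊆ (B : ℕ → Finset ℕ) k := by
      intro a ha
      obtain ⟨i, _, rfl⟩ := Finset.mem_image.mp ha
      exact hmem i
    have h3 : c + 1 ≤ ((B : ℕ → Finset ℕ) k).card := by
      have := Finset.card_le_card hcard
      rwa [Finset.card_image_of_injective _ Fin.val_injective, Finset.card_univ,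
        Fintype.card_fin] at this
    have h4 : ((B : ℕ → Finset ℕ) k).card = c := by
      rw [h1 B B.2 k, hk_def, hgT]
    omega
  -- count: continuum ≤ #(ℕ → Fin (c+1)) ≤ #𝓑 * c
  have hcont : Cardinal.continuum ≤ Cardinal.mk (ℕ → Fin (c+1)) := by
    have : Cardinal.mk (ℕ → Fin (c+1)) = ((c+1 : ℕ) : Cardinal) ^ Cardinal.aleph0 := by
      rw [← Cardinal.mk_nat, ← Cardinal.mk_fin (c+1), Cardinal.power_def]
    rw [this, Cardinal.nat_power_eq le_rfl (by omega), Cardinal.two_power_aleph0]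
  have hsum : Cardinal.mk (ℕ → Fin (c+1)) ≤ Cardinal.mk 𝓑 * (c : Cardinal) := by
    calc Cardinal.mk (ℕ → Fin (c+1))
        = Cardinal.mk ((B : 𝓑) × {r // Ψ r = B}) :=
          (Cardinal.mk_congr (Equiv.sigmaFiberEquiv Ψ)).symm
      _ = Cardinal.sum (fun B : 𝓑 => Cardinal.mk {r // Ψ r = B}) := Cardinal.mk_sigma _
      _ ≤ Cardinal.sum (fun _ : 𝓑 => (c : Cardinal)) := Cardinal.sum_le_sum _ _ key
      _ = Cardinal.mk 𝓑 * (c : Cardinal) := Cardinal.sum_const' _ _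
  by_contra hlt
  have : Cardinal.mk 𝓑 * (c : Cardinal) < Cardinal.continuum :=
    Cardinal.mul_lt_of_lt Cardinal.aleph0_le_continuum (not_le.mp hlt)
      (Cardinal.nat_lt_continuum c)
  exact absurd (hcont.trans hsum) (not_le.mpr this)

theorem slalomCov_liminf (f g : ℕ → ℕ) (hg : ∀ k, 1 ≤ g k) (hgf : ∀ k, g k < f k)
    (hbd : ∃ C : ℕ, {k : ℕ | g k ≤ C}.Infinite) :
    slalomCov f g = Cardinal.continuum := by
  obtain ⟨C, hS⟩ := hbd
  obtain ⟨c, hc, hT⟩ := SlalomAux.pigeon g hg C hS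
  obtain ⟨𝓑₀, h𝓑₀1, h𝓑₀2, h𝓑₀3⟩ := SlalomAux.upper f g hg hgf
  have hmem : Cardinal.mk 𝓑₀ ∈ { c : Cardinal | ∃ 𝓑 : Set (ℕ → Finset ℕ),
      (∀ B ∈ 𝓑, IsSlalom g B) ∧
      (∀ x : ℕ → ℕ, (∀ k, x k < f k) → ∃ B ∈ 𝓑, Covers B x) ∧
      c = Cardinal.mk 𝓑 } := ⟨𝓑₀, h𝓑₀1, h𝓑₀2, rfl⟩
  apply le_antisymm
  · exact (csInf_le (OrderBot.bddBelow _) hmem).trans h𝓑₀3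
  · apply le_csInf ⟨_, hmem⟩
    rintro b ⟨𝓑, hB1, hB2, rfl⟩
    exact SlalomAux.lower f g hg hgf c hc hT 𝓑 hB1 hB2
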